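/- Let a, b, k be nonnegative integers with k ≤ min(a,b). Then the poset (A_k([a] × [b]), ≤_k) is isomorphic to the product poset C(a,k) × C(b,k). Explicitly, the map sending the antichain {(x_1,y_1),…,(x_k,y_k)} with x_1 < ⋯ < x_k and y_1 > ⋯ > y_k to the pair ((x_1,…,x_k), (y_k,…,y_1)) is a poset isomorphism. -/

import Mathlib

/-- The product poset `[a] × [b]` of the chains `{1,…,a}` and `{1,…,b}`,
with the componentwise order. -/
abbrev Box (a b : ℕ) : Type :=
  {p : ℕ × ℕ // (1 ≤ p.1 ∧ p.1 ≤ a) ∧ (1 ≤ p.2 ∧ p.2 ≤ b)}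

/-- The poset `C(n,k)`: `k`-element subsets of `{1,…,n}` written as increasing
sequences, ordered componentwise. -/
abbrev GaleC (n k : ℕ) : Type :=
  {x : Fin k → ℕ // StrictMono x ∧ ∀ i, 1 ≤ x i ∧ x i ≤ n}


/-- `A_k(P)`: the set of antichains of `P` of cardinality exactly `k`. -/
def AkSet (P : Type*) [PartialOrder P] (k : ℕ) : Type _ :=
  {A : Finset P // IsAntichain (· ≤ ·) (A : Set P) ∧ A.card = k}

/-- The underlying finite set of elements of an antichain in `A_k(P)`. -/
def AkSet.carrier {P : Type*} [PartialOrder P] {k : ℕ} (A : AkSet P k) : Finset P :=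
  Subtype.val A

/-- `A ≺_k B` iff `A \ B = {a}` and `B \ A = {b}` are singletons with `a <_P b`. -/
def PrecK {P : Type*} [PartialOrder P] {k : ℕ} (A B : AkSet P k) : Prop :=
  ∃ a b : P,
    ((A.carrier : Set P) \ (B.carrier : Set P)) = {a} ∧
    ((B.carrier : Set P) \ (A.carrier : Set P)) = {b} ∧ a < b

/-- `≤_k`: the reflexive transitive closure of `≺_k` on `A_k(P)`. -/
def LeK {P : Type*} [PartialOrder P] {k : ℕ} : AkSet P k → AkSet P k → Prop :=
  Relation.ReflTransGen PrecK

/-- `A_k(P)` is equipped with the order `≤_k`. -/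
instance {P : Type*} [PartialOrder P] {k : ℕ} : LE (AkSet P k) := ⟨LeK⟩

namespace St14

variable {a b k : ℕ}

def xc (p : Box a b) : ℕ := p.1.1
def yc (p : Box a b) : ℕ := p.1.2

lemma box_le {p q : Box a b} : p ≤ q ↔ xc p ≤ xc q ∧ yc p ≤ yc q := Iff.rfl

lemma box_ext {p q : Box a b} (hx : xc p = xc q) (hy : yc p = yc q) : p = q := by
  apply Subtype.ext; exact Prod.ext hx hy

lemma box_lt_of {p q : Box a b} (hx : xc p ≤ xc q) (hy : yc p ≤ yc q) (hne : p ≠ q) :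
    p < q := lt_of_le_of_ne (box_le.mpr ⟨hx, hy⟩) hne

lemma yc_lt_of_xc_le {S : Set (Box a b)} (hS : IsAntichain (· ≤ ·) S)
    {p q : Box a b} (hp : p ∈ S) (hq : q ∈ S) (hne : p ≠ q) (hx : xc p ≤ xc q) :
    yc q < yc p := by
  by_contra h
  exact hS hp hq hne (box_le.mpr ⟨hx, le_of_not_gt h⟩)

lemma xc_injOn {S : Set (Box a b)} (hS : IsAntichain (· ≤ ·) S) : Set.InjOn xc S := by
  intro p hp q hq h
  by_contra hne
  have h1 := yc_lt_of_xc_le hS hp hq hne h.le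
  have h2 := yc_lt_of_xc_le hS hq hp (Ne.symm hne) h.ge
  omega

lemma yc_injOn {S : Set (Box a b)} (hS : IsAntichain (· ≤ ·) S) : Set.InjOn yc S := by
  intro p hp q hq h
  by_contra hne
  rcases le_total (xc p) (xc q) with hx | hx
  · have := yc_lt_of_xc_le hS hp hq hne hx; omega
  · have := yc_lt_of_xc_le hS hq hp (Ne.symm hne) hx; omega

/-- Enumeration predicate. -/
def IsEnum (A : AkSet (Box a b) k) (f : Fin k → Box a b) : Prop :=
  StrictMono (fun i => xc (f i)) ∧ Set.range f = (A.carrier : Set (Box a b))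

lemma IsEnum.mem {A : AkSet (Box a b) k} {f} (h : IsEnum A f) (i : Fin k) :
    f i ∈ (A.carrier : Set (Box a b)) := h.2 ▸ Set.mem_range_self i

lemma IsEnum.yanti {A : AkSet (Box a b) k} {f} (h : IsEnum A f) :
    StrictAnti (fun i => yc (f i)) := by
  intro i j hij
  have hx := h.1 hij
  have hne : f i ≠ f j := fun e => absurd (congrArg xc e) (ne_of_lt hx)
  exact yc_lt_of_xc_le A.2.1 (h.mem i) (h.mem j) hne hx.le

lemma IsEnum.inj {A : AkSet (Box a b) k} {f} (h : IsEnum A f) : Function.Injective f := by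
  intro i j e
  exact h.1.injective (by simp [congrArg xc e])

lemma exists_isEnum (A : AkSet (Box a b) k) : ∃ f, IsEnum A f := by
  classical
  set s : Finset ℕ := A.carrier.image xc with hs
  have hcard : s.card = k :=
    (Finset.card_image_of_injOn (xc_injOn A.2.1)).trans A.2.2
  set m := s.orderEmbOfFin hcard with hm
  have hmem : ∀ i : Fin k, ∃ p ∈ A.carrier, xc p = m i := by
    intro i
    have h1 : m i ∈ s := s.orderEmbOfFin_mem hcard i
    rw [hs] at h1
    obtain ⟨p, hp, hpx⟩ := Finset.mem_image.1 h1
    exact ⟨p, hp, hpx⟩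
  choose f hf hfx using hmem
  refine ⟨f, ?_, ?_⟩
  · intro i j hij
    simp only [hfx i, hfx j]
    exact (s.orderEmbOfFin hcard).strictMono hij
  · apply Set.eq_of_subset_of_subset
    · rintro _ ⟨i, rfl⟩; exact hf i
    · intro p hp
      have hps : xc p ∈ s := by
        rw [hs]; exact Finset.mem_image_of_mem _ hp
      have : xc p ∈ Set.range m := by rw [Finset.range_orderEmbOfFin]; exact_mod_cast hps
      obtain ⟨i, hi⟩ := this
      refine ⟨i, xc_injOn A.2.1 (hf i) hp (by rw [hfx i, hi])⟩

lemma isEnum_unique {A : AkSet (Box a b) k} {f g} (hf : IsEnum A f) (hg : IsEnum A g) :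
    f = g := by
  classical
  set s : Finset ℕ := A.carrier.image xc with hs
  have hcard : s.card = k :=
    (Finset.card_image_of_injOn (xc_injOn A.2.1)).trans A.2.2
  have hmemf : ∀ i, xc (f i) ∈ s := fun i => Finset.mem_image_of_mem _ (hf.mem i)
  have hmemg : ∀ i, xc (g i) ∈ s := fun i => Finset.mem_image_of_mem _ (hg.mem i)
  have e1 := Finset.orderEmbOfFin_unique hcard hmemf hf.1
  have e2 := Finset.orderEmbOfFin_unique hcard hmemg hg.1
  funext i
  exact xc_injOn A.2.1 (hf.mem i) (hg.mem i)
    (by rw [show xc (f i) = _ from congrFun e1 i, show xc (g i) = _ from congrFun e2 i])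

noncomputable def enum (A : AkSet (Box a b) k) : Fin k → Box a b :=
  (exists_isEnum A).choose

lemma enum_isEnum (A : AkSet (Box a b) k) : IsEnum A (enum A) :=
  (exists_isEnum A).choose_spec

end St14
namespace St14

variable {a b k : ℕ}

/-- Build an antichain from a strictly x-monotone, strictly y-antitone family. -/
def mkA (f : Fin k → Box a b) (hx : StrictMono (fun i => xc (f i)))
    (hy : StrictAnti (fun i => yc (f i))) : AkSet (Box a b) k := by
  classical
  refine ⟨Finset.image f Finset.univ, ?_, ?_⟩
  · rintro p hp q hq hne hle
    simp only [Finset.coe_image, Finset.coe_univ, Set.image_univ, Set.mem_range] at hp hq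
    obtain ⟨i, rfl⟩ := hp
    obtain ⟨j, rfl⟩ := hq
    rcases lt_trichotomy i j with h | h | h
    · exact absurd (box_le.mp hle).2 (not_le.mpr (hy h))
    · exact hne (by rw [h])
    · exact absurd (box_le.mp hle).1 (not_le.mpr (hx h))
  · rw [Finset.card_image_of_injective _ (fun i j e => hx.injective (by rw [e])),
      Finset.card_univ, Fintype.card_fin]

lemma mkA_isEnum (f : Fin k → Box a b) (hx) (hy) : IsEnum (mkA f hx hy) f := by
  refine ⟨hx, ?_⟩
  show Set.range f = ↑(Finset.image f Finset.univ)
  rw [Finset.coe_image, Finset.coe_univ, Set.image_univ]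

lemma enum_mkA (f : Fin k → Box a b) (hx) (hy) : enum (mkA f hx hy) = f :=
  isEnum_unique (enum_isEnum _) (mkA_isEnum f hx hy)

noncomputable def toX (A : AkSet (Box a b) k) : GaleC a k :=
  ⟨fun i => xc (enum A i), (enum_isEnum A).1, fun i => (enum A i).2.1⟩

noncomputable def toY (A : AkSet (Box a b) k) : GaleC b k :=
  ⟨fun i => yc (enum A i.rev),
   fun i j hij => (enum_isEnum A).yanti (Fin.rev_lt_rev.mpr hij),
   fun i => (enum A i.rev).2.2⟩

def pt (X : GaleC a k) (Y : GaleC b k) (i : Fin k) : Box a b :=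
  ⟨(X.1 i, Y.1 i.rev), ⟨X.2.2 i, Y.2.2 i.rev⟩⟩

lemma pt_x (X : GaleC a k) (Y : GaleC b k) (i : Fin k) : xc (pt X Y i) = X.1 i := rfl
lemma pt_y (X : GaleC a k) (Y : GaleC b k) (i : Fin k) : yc (pt X Y i) = Y.1 i.rev := rfl

def ofXY (X : GaleC a k) (Y : GaleC b k) : AkSet (Box a b) k :=
  mkA (pt X Y) (fun i j hij => X.2.1 hij)
    (fun i j hij => Y.2.1 (Fin.rev_lt_rev.mpr hij))

lemma left_inv (A : AkSet (Box a b) k) : ofXY (toX A) (toY A) = A := by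
  have h : pt (toX A) (toY A) = enum A := by
    funext i
    apply box_ext
    · rfl
    · show yc (enum A i.rev.rev) = yc (enum A i)
      rw [Fin.rev_rev]
  apply Subtype.ext
  apply Finset.coe_injective
  show ↑(Finset.image (pt (toX A) (toY A)) Finset.univ) = ((A.carrier : Finset (Box a b)) : Set (Box a b))
  rw [Finset.coe_image, Finset.coe_univ, Set.image_univ, h]
  exact (enum_isEnum A).2

lemma right_inv (X : GaleC a k) (Y : GaleC b k) :
    toX (ofXY X Y) = X ∧ toY (ofXY X Y) = Y := by
  have he : enum (ofXY X Y) = pt X Y := enum_mkA _ _ _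
  constructor
  · apply Subtype.ext; funext i
    show xc (enum (ofXY X Y) i) = X.1 i
    rw [he, pt_x]
  · apply Subtype.ext; funext i
    show yc (enum (ofXY X Y) i.rev) = Y.1 i
    rw [he, pt_y, Fin.rev_rev]

end St14
namespace St14

variable {a b k : ℕ}

open Finset in
lemma sorted_le_of_counts {f g : Fin k → ℕ} (hf : StrictMono f) (hg : Monotone g)
    (h : ∀ t, (univ.filter fun j => g j ≤ t).card ≤ (univ.filter fun j => f j ≤ t).card) :
    ∀ i, f i ≤ g i := by
  intro i
  by_contra hlt
  push_neg at hlt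
  have h1 : (Finset.Iic i) ⊆ (univ.filter fun j => g j ≤ g i) := by
    intro j hj
    simp only [Finset.mem_filter, Finset.mem_univ, true_and]
    exact hg (Finset.mem_Iic.mp hj)
  have h2 : (univ.filter fun j => f j ≤ g i) ⊆ Finset.Iio i := by
    intro j hj
    simp only [Finset.mem_filter, Finset.mem_univ, true_and] at hj
    simp only [Finset.mem_Iio]
    by_contra hc
    push_neg at hc
    exact absurd (le_trans (hf.monotone hc) hj) (not_le.mpr hlt)
  have c1 := Finset.card_le_card h1
  have c2 := Finset.card_le_card h2
  rw [Fin.card_Iic] at c1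
  rw [Fin.card_Iio] at c2
  have := h (g i)
  omega

open Finset in
lemma count_card {A : AkSet (Box a b) k} {f : Fin k → Box a b} (hf : Function.Injective f)
    (hr : Set.range f = (A.carrier : Set (Box a b))) (c : Box a b → ℕ) (t : ℕ) :
    (univ.filter fun j => c (f j) ≤ t).card = (A.carrier.filter fun p => c p ≤ t).card := by
  apply Finset.card_nbij f
  · intro j hj
    simp only [mem_coe, mem_filter, mem_univ, true_and] at hj ⊢
    refine ⟨?_, hj⟩
    have : f j ∈ (A.carrier : Set (Box a b)) := hr ▸ Set.mem_range_self j
    exact_mod_cast this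
  · exact hf.injOn
  · intro p hp
    simp only [coe_filter, Set.mem_setOf_eq, mem_coe] at hp
    have : p ∈ (A.carrier : Set (Box a b)) := hp.1
    rw [← hr] at this
    obtain ⟨j, rfl⟩ := this
    exact ⟨j, by simp [hp.2], rfl⟩

open Finset in
lemma prec_filter_le {A B : AkSet (Box a b) k} {p q : Box a b}
    (hAB : (A.carrier : Set (Box a b)) \ (B.carrier : Set (Box a b)) = {p})
    (hBA : (B.carrier : Set (Box a b)) \ (A.carrier : Set (Box a b)) = {q})
    (c : Box a b → ℕ) (hc : c p ≤ c q) (t : ℕ) :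
    (B.carrier.filter fun r => c r ≤ t).card ≤ (A.carrier.filter fun r => c r ≤ t).card := by
  have hpA : p ∈ A.carrier := by
    have : p ∈ (A.carrier : Set (Box a b)) \ (B.carrier : Set (Box a b)) := hAB ▸ rfl
    exact_mod_cast this.1
  have hpB : p ∉ B.carrier := by
    have : p ∈ (A.carrier : Set (Box a b)) \ (B.carrier : Set (Box a b)) := hAB ▸ rfl
    intro hc'
    exact this.2 (by exact_mod_cast hc')
  have hmem : ∀ r, r ∈ B.carrier → r ≠ q → r ∈ A.carrier := by
    intro r hr hne
    by_contra hnA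
    have : r ∈ (B.carrier : Set (Box a b)) \ (A.carrier : Set (Box a b)) := by
      constructor
      · exact_mod_cast hr
      · intro hh; exact hnA (by exact_mod_cast hh)
    rw [hBA] at this
    exact hne this
  apply Finset.card_le_card_of_injOn (fun r => if r = q then p else r)
  · intro r hr
    simp only [mem_coe, mem_filter] at hr ⊢
    by_cases hq : r = q
    · simp only [hq, if_pos rfl]
      exact ⟨hpA, le_trans hc (hq ▸ hr.2)⟩
    · simp only [if_neg hq]
      exact ⟨hmem r hr.1 hq, hr.2⟩
  · intro r1 h1 r2 h2 he
    simp only [coe_filter, Set.mem_setOf_eq] at h1 h2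
    dsimp only at he
    by_cases e1 : r1 = q <;> by_cases e2 : r2 = q
    · rw [e1, e2]
    · rw [if_pos e1, if_neg e2] at he
      exact absurd (he ▸ h2.1) hpB
    · rw [if_neg e1, if_pos e2] at he
      exact absurd (he ▸ h1.1) hpB
    · rwa [if_neg e1, if_neg e2] at he

def Dom (A B : AkSet (Box a b) k) : Prop :=
  (∀ i, xc (enum A i) ≤ xc (enum B i)) ∧ (∀ i, yc (enum A i) ≤ yc (enum B i))

lemma dom_refl (A : AkSet (Box a b) k) : Dom A A := ⟨fun _ => le_refl _, fun _ => le_refl _⟩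

lemma dom_trans {A B C : AkSet (Box a b) k} (h1 : Dom A B) (h2 : Dom B C) : Dom A C :=
  ⟨fun i => le_trans (h1.1 i) (h2.1 i), fun i => le_trans (h1.2 i) (h2.2 i)⟩

open Finset in
lemma prec_dom {A B : AkSet (Box a b) k} (h : PrecK A B) : Dom A B := by
  obtain ⟨p, q, hAB, hBA, hpq⟩ := h
  have hcx : xc p ≤ xc q := (box_le.mp hpq.le).1
  have hcy : yc p ≤ yc q := (box_le.mp hpq.le).2
  constructor
  · apply sorted_le_of_counts (enum_isEnum A).1 (enum_isEnum B).1.monotone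
    intro t
    rw [count_card (enum_isEnum A).inj (enum_isEnum A).2 xc t,
        count_card (enum_isEnum B).inj (enum_isEnum B).2 xc t]
    exact prec_filter_le hAB hBA xc hcx t
  · have key : ∀ i : Fin k, yc (enum A i.rev) ≤ yc (enum B i.rev) := by
      have hfA : StrictMono (fun i : Fin k => yc (enum A i.rev)) := by
        intro i j hij
        exact (enum_isEnum A).yanti (Fin.rev_lt_rev.mpr hij)
      have hfB : StrictMono (fun i : Fin k => yc (enum B i.rev)) := by
        intro i j hij
        exact (enum_isEnum B).yanti (Fin.rev_lt_rev.mpr hij)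
      apply sorted_le_of_counts hfA hfB.monotone
      intro t
      have rA : Set.range (enum A ∘ Fin.rev) = (A.carrier : Set (Box a b)) := by
        rw [Function.Surjective.range_comp Fin.rev_surjective (enum A)]
        exact (enum_isEnum A).2
      have rB : Set.range (enum B ∘ Fin.rev) = (B.carrier : Set (Box a b)) := by
        rw [Function.Surjective.range_comp Fin.rev_surjective (enum B)]
        exact (enum_isEnum B).2
      show (univ.filter fun j => yc ((enum B ∘ Fin.rev) j) ≤ t).card ≤
        (univ.filter fun j => yc ((enum A ∘ Fin.rev) j) ≤ t).card
      rw [count_card ((enum_isEnum A).inj.comp Fin.rev_injective) rA yc t,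
          count_card ((enum_isEnum B).inj.comp Fin.rev_injective) rB yc t]
      exact prec_filter_le hAB hBA yc hcy t
    intro i
    have := key i.rev
    rwa [Fin.rev_rev] at this

lemma leK_dom {A B : AkSet (Box a b) k} (h : LeK A B) : Dom A B := by
  induction h with
  | refl => exact dom_refl A
  | tail _ h2 ih => exact dom_trans ih (prec_dom h2)

end St14
namespace St14

variable {a b k : ℕ}

lemma eq_of_enum_eq {A B : AkSet (Box a b) k} (h : enum A = enum B) : A = B := by
  apply Subtype.ext
  apply Finset.coe_injective
  show ((A.carrier : Finset (Box a b)) : Set (Box a b)) = ((B.carrier : Finset (Box a b)) : Set (Box a b))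
  rw [← (enum_isEnum A).2, ← (enum_isEnum B).2, h]

/-- the measure for the induction -/
noncomputable def meas (A B : AkSet (Box a b) k) : ℕ :=
  ∑ i : Fin k, ((xc (enum B i) - xc (enum A i)) + (yc (enum B i) - yc (enum A i)))

open Finset in
lemma dom_step {A B : AkSet (Box a b) k} (hd : Dom A B) (hne : A ≠ B) :
    ∃ A', PrecK A A' ∧ Dom A' B ∧ meas A' B < meas A B := by
  classical
  have hAinj : Function.Injective (enum A) := (enum_isEnum A).inj
  have hAx : StrictMono (fun i => xc (enum A i)) := (enum_isEnum A).1
  have hAy : StrictAnti (fun i => yc (enum A i)) := (enum_isEnum A).yanti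
  have hBx : StrictMono (fun i => xc (enum B i)) := (enum_isEnum B).1
  have hBy : StrictAnti (fun i => yc (enum B i)) := (enum_isEnum B).yanti
  have hdx : ∀ i, xc (enum A i) ≤ xc (enum B i) := hd.1
  have hdy : ∀ i, yc (enum A i) ≤ yc (enum B i) := hd.2
  have hexj : ∃ j, enum A j ≠ enum B j := by
    by_contra hc
    push_neg at hc
    exact hne (eq_of_enum_eq (funext hc))
  by_cases hx : ∃ i, xc (enum A i) < xc (enum B i)
  · -- x case
    obtain ⟨i, himem, hmaxle⟩ :
        ∃ i, xc (enum A i) < xc (enum B i) ∧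
          ∀ j, xc (enum A j) < xc (enum B j) → j ≤ i := by
      obtain ⟨i0, hi0⟩ := hx
      have hSne : (univ.filter (fun i => xc (enum A i) < xc (enum B i))).Nonempty :=
        ⟨i0, Finset.mem_filter.mpr ⟨Finset.mem_univ _, hi0⟩⟩
      refine ⟨_, (Finset.mem_filter.mp (Finset.max'_mem _ hSne)).2, fun j hj => ?_⟩
      exact Finset.le_max' _ j (Finset.mem_filter.mpr ⟨Finset.mem_univ _, hj⟩)
    have hmax : ∀ j, i < j → xc (enum A j) = xc (enum B j) := by
      intro j hj
      rcases lt_or_eq_of_le (hdx j) with h | h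
      · exact absurd (hmaxle j h) (not_le.mpr hj)
      · exact h
    have hgt : ∀ j, i < j → xc (enum A i) + 1 < xc (enum A j) := by
      intro j hj
      have h1 : xc (enum B i) < xc (enum B j) := hBx hj
      have h2 := hmax j hj
      omega
    set p' : Box a b := ⟨(xc (enum A i) + 1, yc (enum A i)),
      ⟨⟨Nat.le_add_left _ _, le_trans himem ((enum B i).2.1.2)⟩, (enum A i).2.2⟩⟩ with hp'
    set f' := Function.update (enum A) i p' with hf'
    have f'_i : f' i = p' := Function.update_self i p' (enum A)
    have f'_ne : ∀ j, j ≠ i → f' j = enum A j := fun j hj => Function.update_of_ne hj p' (enum A)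
    have xp' : xc p' = xc (enum A i) + 1 := by rw [hp']; rfl
    have yp' : yc p' = yc (enum A i) := by rw [hp']; rfl
    have xf'_i : xc (f' i) = xc (enum A i) + 1 := by rw [f'_i]; exact xp'
    have yf' : ∀ j, yc (f' j) = yc (enum A j) := by
      intro j
      by_cases hj : j = i
      · subst hj; rw [f'_i]; exact yp'
      · rw [f'_ne j hj]
    have hx' : StrictMono (fun j => xc (f' j)) := by
      intro j1 j2 h12
      show xc (f' j1) < xc (f' j2)
      by_cases e1 : j1 = i
      · subst e1
        rw [f'_ne j2 (ne_of_gt h12), xf'_i]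
        exact hgt j2 h12
      · by_cases e2 : j2 = i
        · subst e2
          rw [f'_ne j1 e1, xf'_i]
          exact Nat.lt_succ_of_lt (hAx h12)
        · rw [f'_ne j1 e1, f'_ne j2 e2]
          exact hAx h12
    have hy' : StrictAnti (fun j => yc (f' j)) := by
      have he : (fun j => yc (f' j)) = (fun j => yc (enum A j)) := funext yf'
      rw [he]
      exact hAy
    refine ⟨mkA f' hx' hy', ?_, ?_, ?_⟩
    · -- PrecK A A'
      refine ⟨enum A i, p', ?_, ?_, ?_⟩
      · rw [← (enum_isEnum A).2, ← (mkA_isEnum f' hx' hy').2]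
        ext r
        simp only [Set.mem_diff, Set.mem_range, Set.mem_singleton_iff]
        constructor
        · rintro ⟨⟨j, rfl⟩, hr⟩
          by_cases hj : j = i
          · rw [hj]
          · exact absurd ⟨j, f'_ne j hj⟩ hr
        · rintro rfl
          refine ⟨⟨i, rfl⟩, ?_⟩
          rintro ⟨j, hj⟩
          by_cases e : j = i
          · subst e
            rw [f'_i] at hj
            have h2 := congrArg xc hj
            rw [xp'] at h2
            omega
          · rw [f'_ne j e] at hj
            exact e (hAinj hj)
      · rw [← (enum_isEnum A).2, ← (mkA_isEnum f' hx' hy').2]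
        have hp'nA : p' ∉ Set.range (enum A) := by
          rintro ⟨j, hj⟩
          have hyj : yc (enum A j) = yc (enum A i) := by
            have h2 := congrArg yc hj
            rwa [yp'] at h2
          have hje : j = i := hAy.injective hyj
          subst hje
          have h2 := congrArg xc hj
          rw [xp'] at h2
          omega
        ext r
        simp only [Set.mem_diff, Set.mem_range, Set.mem_singleton_iff]
        constructor
        · rintro ⟨⟨j, rfl⟩, hr⟩
          by_cases hj : j = i
          · rw [hj, f'_i]
          · exact absurd ⟨j, rfl⟩ (f'_ne j hj ▸ hr)
        · rintro rfl
          exact ⟨⟨i, f'_i⟩, hp'nA⟩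
      · refine box_lt_of ?_ ?_ ?_
        · rw [xp']; omega
        · rw [yp']
        · intro hc
          have h2 := congrArg xc hc
          rw [xp'] at h2
          omega
    · -- Dom A' B
      rw [Dom, show enum (mkA f' hx' hy') = f' from enum_mkA f' hx' hy']
      constructor
      · intro j
        by_cases hj : j = i
        · subst hj; rw [xf'_i]; exact himem
        · rw [f'_ne j hj]; exact hdx j
      · intro j
        rw [yf' j]; exact hdy j
    · -- meas decrease
      rw [meas, meas, show enum (mkA f' hx' hy') = f' from enum_mkA f' hx' hy']
      apply Finset.sum_lt_sum
      · intro j _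
        by_cases hj : j = i
        · rw [hj, xf'_i, yf' i]
          omega
        · rw [f'_ne j hj]
      · refine ⟨i, Finset.mem_univ i, ?_⟩
        rw [xf'_i, yf' i]
        have := himem
        omega
  · -- y case
    push_neg at hx
    have hxeq : ∀ i, xc (enum A i) = xc (enum B i) := fun i => le_antisymm (hdx i) (hx i)
    have hyex : ∃ i, yc (enum A i) < yc (enum B i) := by
      obtain ⟨j, hj⟩ := hexj
      refine ⟨j, lt_of_le_of_ne (hdy j) ?_⟩
      intro hc
      exact hj (box_ext (hxeq j) hc)
    obtain ⟨i, himem, hminle⟩ :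
        ∃ i, yc (enum A i) < yc (enum B i) ∧
          ∀ j, yc (enum A j) < yc (enum B j) → i ≤ j := by
      obtain ⟨i0, hi0⟩ := hyex
      have hSne : (univ.filter (fun i => yc (enum A i) < yc (enum B i))).Nonempty :=
        ⟨i0, Finset.mem_filter.mpr ⟨Finset.mem_univ _, hi0⟩⟩
      refine ⟨_, (Finset.mem_filter.mp (Finset.min'_mem _ hSne)).2, fun j hj => ?_⟩
      exact Finset.min'_le _ j (Finset.mem_filter.mpr ⟨Finset.mem_univ _, hj⟩)
    have hmin : ∀ j, j < i → yc (enum A j) = yc (enum B j) := by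
      intro j hj
      rcases lt_or_eq_of_le (hdy j) with h | h
      · exact absurd (hminle j h) (not_le.mpr hj)
      · exact h
    have hgt : ∀ j, j < i → yc (enum A i) + 1 < yc (enum A j) := by
      intro j hj
      have h1 : yc (enum B i) < yc (enum B j) := hBy hj
      have h2 := hmin j hj
      omega
    set p' : Box a b := ⟨(xc (enum A i), yc (enum A i) + 1),
      ⟨(enum A i).2.1, ⟨Nat.le_add_left _ _, le_trans himem ((enum B i).2.2.2)⟩⟩⟩ with hp'
    set f' := Function.update (enum A) i p' with hf'
    have f'_i : f' i = p' := Function.update_self i p' (enum A)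
    have f'_ne : ∀ j, j ≠ i → f' j = enum A j := fun j hj => Function.update_of_ne hj p' (enum A)
    have xp' : xc p' = xc (enum A i) := by rw [hp']; rfl
    have yp' : yc p' = yc (enum A i) + 1 := by rw [hp']; rfl
    have yf'_i : yc (f' i) = yc (enum A i) + 1 := by rw [f'_i]; exact yp'
    have xf' : ∀ j, xc (f' j) = xc (enum A j) := by
      intro j
      by_cases hj : j = i
      · subst hj; rw [f'_i]; exact xp'
      · rw [f'_ne j hj]
    have hx' : StrictMono (fun j => xc (f' j)) := by
      have he : (fun j => xc (f' j)) = (fun j => xc (enum A j)) := funext xf'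
      rw [he]
      exact hAx
    have hy' : StrictAnti (fun j => yc (f' j)) := by
      intro j1 j2 h12
      show yc (f' j2) < yc (f' j1)
      by_cases e2 : j2 = i
      · subst e2
        rw [f'_ne j1 (ne_of_lt h12), yf'_i]
        exact hgt j1 h12
      · by_cases e1 : j1 = i
        · subst e1
          rw [f'_ne j2 e2, yf'_i]
          exact Nat.lt_succ_of_lt (hAy h12)
        · rw [f'_ne j1 e1, f'_ne j2 e2]
          exact hAy h12
    refine ⟨mkA f' hx' hy', ?_, ?_, ?_⟩
    · refine ⟨enum A i, p', ?_, ?_, ?_⟩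
      · rw [← (enum_isEnum A).2, ← (mkA_isEnum f' hx' hy').2]
        ext r
        simp only [Set.mem_diff, Set.mem_range, Set.mem_singleton_iff]
        constructor
        · rintro ⟨⟨j, rfl⟩, hr⟩
          by_cases hj : j = i
          · rw [hj]
          · exact absurd ⟨j, f'_ne j hj⟩ hr
        · rintro rfl
          refine ⟨⟨i, rfl⟩, ?_⟩
          rintro ⟨j, hj⟩
          by_cases e : j = i
          · subst e
            rw [f'_i] at hj
            have h2 := congrArg yc hj
            rw [yp'] at h2
            omega
          · rw [f'_ne j e] at hj
            exact e (hAinj hj)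
      · rw [← (enum_isEnum A).2, ← (mkA_isEnum f' hx' hy').2]
        have hp'nA : p' ∉ Set.range (enum A) := by
          rintro ⟨j, hj⟩
          have hxj : xc (enum A j) = xc (enum A i) := by
            have h2 := congrArg xc hj
            rwa [xp'] at h2
          have hje : j = i := hAx.injective hxj
          subst hje
          have h2 := congrArg yc hj
          rw [yp'] at h2
          omega
        ext r
        simp only [Set.mem_diff, Set.mem_range, Set.mem_singleton_iff]
        constructor
        · rintro ⟨⟨j, rfl⟩, hr⟩
          by_cases hj : j = i
          · rw [hj, f'_i]
          · exact absurd ⟨j, rfl⟩ (f'_ne j hj ▸ hr)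
        · rintro rfl
          exact ⟨⟨i, f'_i⟩, hp'nA⟩
      · refine box_lt_of ?_ ?_ ?_
        · rw [xp']
        · rw [yp']; omega
        · intro hc
          have h2 := congrArg yc hc
          rw [yp'] at h2
          omega
    · rw [Dom, show enum (mkA f' hx' hy') = f' from enum_mkA f' hx' hy']
      constructor
      · intro j
        rw [xf' j]; exact hdx j
      · intro j
        by_cases hj : j = i
        · subst hj; rw [yf'_i]; exact himem
        · rw [f'_ne j hj]; exact hdy j
    · rw [meas, meas, show enum (mkA f' hx' hy') = f' from enum_mkA f' hx' hy']
      apply Finset.sum_lt_sum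
      · intro j _
        by_cases hj : j = i
        · rw [hj, yf'_i, xf' i]
          omega
        · rw [f'_ne j hj]
      · refine ⟨i, Finset.mem_univ i, ?_⟩
        rw [yf'_i, xf' i]
        have := himem
        omega

lemma dom_leK_aux : ∀ (N : ℕ) (A B : AkSet (Box a b) k), Dom A B → meas A B ≤ N → LeK A B := by
  intro N
  induction N with
  | zero =>
    intro A B hd hm
    by_cases he : A = B
    · exact he ▸ Relation.ReflTransGen.refl
    · obtain ⟨A', _, _, hlt⟩ := dom_step hd he
      omega
  | succ n ih =>
    intro A B hd hm
    by_cases he : A = B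
    · exact he ▸ Relation.ReflTransGen.refl
    · obtain ⟨A', hp, hd', hlt⟩ := dom_step hd he
      exact Relation.ReflTransGen.head hp (ih A' B hd' (by omega))

lemma dom_leK {A B : AkSet (Box a b) k} (hd : Dom A B) : LeK A B :=
  dom_leK_aux (meas A B) A B hd le_rfl

end St14
namespace St14

variable {a b k : ℕ}

noncomputable def iso (a b k : ℕ) : AkSet (Box a b) k ≃o GaleC a k × GaleC b k where
  toFun A := (toX A, toY A)
  invFun p := ofXY p.1 p.2
  left_inv A := left_inv A
  right_inv p := Prod.ext (right_inv p.1 p.2).1 (right_inv p.1 p.2).2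
  map_rel_iff' := by
    intro A B
    show (toX A, toY A) ≤ (toX B, toY B) ↔ A ≤ B
    rw [Prod.mk_le_mk]
    constructor
    · rintro ⟨h1, h2⟩
      show LeK A B
      apply dom_leK
      constructor
      · intro i
        exact h1 i
      · intro i
        have := h2 i.rev
        show yc (enum A i) ≤ yc (enum B i)
        have e1 : yc (enum A i.rev.rev) ≤ yc (enum B i.rev.rev) := this
        rwa [Fin.rev_rev] at e1
    · intro h
      have hd := leK_dom h
      constructor
      · intro i
        exact hd.1 i
      · intro i
        exact hd.2 i.rev

end St14

/-- For `k ≤ min(a,b)`, the poset `(A_k([a] × [b]), ≤_k)` is isomorphic to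
`C(a,k) × C(b,k)`; explicitly, the antichain `{(x₁,y₁),…,(x_k,y_k)}` with
`x₁ < ⋯ < x_k` and `y₁ > ⋯ > y_k` is sent to `((x₁,…,x_k), (y_k,…,y_1))`. -/
theorem stmt14 (a b k : ℕ) (hk : k ≤ min a b) :
    ∃ e : AkSet (Box a b) k ≃o GaleC a k × GaleC b k,
      ∀ (A : AkSet (Box a b) k) (f : Fin k → Box a b),
        (StrictMono fun i => (f i).val.1) →
        Set.range f = (A.carrier : Set (Box a b)) →
        ∀ i : Fin k,
          (e A).1.val i = (f i).val.1 ∧ (e A).2.val i = (f i.rev).val.2 := by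
  refine ⟨St14.iso a b k, ?_⟩
  intro A f hmono hrange i
  have hf : St14.IsEnum A f := ⟨hmono, hrange⟩
  have he : St14.enum A = f := St14.isEnum_unique (St14.enum_isEnum A) hf
  constructor
  · show St14.xc (St14.enum A i) = (f i).val.1
    rw [he]
    rfl
  · show St14.yc (St14.enum A i.rev) = (f i.rev).val.2
    rw [he]
    rfl
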